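/- arXiv:1901.04186 — 5 statements merged into one kernel-verified Lean document; each statement's English description precedes it below -/
import Mathlib

section
/- The annihilator of the ring R = R_n(K,J) equals (Ann_K J)·e_{n,1}, i.e., a matrix A ∈ R satisfies AX = XA = 0 for all X ∈ R if and only if A = a·e_{n,1} for some a ∈ K with aJ = Ja = 0. -/
open Matrix

/-- `R_n(K,J)`: the non-unital subring of `n × n` matrices over `K` whose entries on and
above the main diagonal lie in the two-sided ideal `J`. -/
def Rset (n : ℕ) (K : Type) [Ring K] (J : TwoSidedIdeal K) :
    NonUnitalSubring (Matrix (Fin n) (Fin n) K) where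
  carrier := {M | ∀ i j : Fin n, i ≤ j → M i j ∈ J}
  zero_mem' := by intro i j _; simp [J.zero_mem]
  add_mem' := by intro a b ha hb i j h; exact J.add_mem (ha i j h) (hb i j h)
  neg_mem' := by intro a ha i j h; exact J.neg_mem (ha i j h)
  mul_mem' := by
    intro a b ha hb i j h
    show (∑ k, a i k * b k j) ∈ J
    refine J.finsetSum_mem _ _ fun k _ => ?_
    rcases le_or_gt i k with hik | hik
    · exact J.mul_mem_right _ _ (ha i k hik)
    · exact J.mul_mem_left _ _ (hb k j (le_trans hik.le h))

lemma stdBasis_mem {n : ℕ} {K : Type} [Ring K] {J : TwoSidedIdeal K}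
    {i j : Fin n} {y : K} (h : i ≤ j → y ∈ J) :
    Matrix.single i j y ∈ Rset n K J := by
  intro a b hab
  rw [Matrix.single]
  by_cases hc : i = a ∧ j = b
  · obtain ⟨rfl, rfl⟩ := hc
    simpa using h hab
  · simp [Matrix.of_apply, if_neg hc, J.zero_mem]

/-- The annihilator of `R = R_n(K,J)` equals `(Ann_K J)·e_{n,1}`: a matrix
`A ∈ R` satisfies `AX = XA = 0` for all `X ∈ R` iff `A = a·e_{n,1}` with `aJ = Ja = 0`. -/
theorem annihilator_of_Rn (n : ℕ) (hn : 2 ≤ n) (K : Type) [Ring K] (J : TwoSidedIdeal K)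
    (A : Matrix (Fin n) (Fin n) K) (hA : A ∈ Rset n K J) :
    (∀ X ∈ Rset n K J, A * X = 0 ∧ X * A = 0) ↔
      ∃ a : K, (∀ j ∈ J, a * j = 0 ∧ j * a = 0) ∧
        A = Matrix.single ⟨n - 1, by omega⟩ ⟨0, by omega⟩ a := by
  set m : Fin n := ⟨n - 1, by omega⟩ with hm
  set z : Fin n := ⟨0, by omega⟩ with hz
  constructor
  · intro h
    refine ⟨A m z, fun x hx => ?_, ?_⟩
    · constructor
      · have hmem : Matrix.single z z x ∈ Rset n K J := stdBasis_mem (fun _ => hx)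
        have := (h _ hmem).1
        have := congrFun (congrFun this m) z
        simpa using this
      · have hmem : Matrix.single m m x ∈ Rset n K J := stdBasis_mem (fun _ => hx)
        have := (h _ hmem).2
        have := congrFun (congrFun this m) z
        simpa using this
    · ext i k
      by_cases hik : i = m ∧ k = z
      · obtain ⟨rfl, rfl⟩ := hik
        simp
      · rw [Matrix.single, Matrix.of_apply]
        rw [if_neg (by tauto)]
        rcases eq_or_ne k z with rfl | hkz
        · -- k = z, so i ≠ m; use X = stdBasisMatrix m i 1
          have him : i ≠ m := by tauto
          have hlt : ¬ (m ≤ i) := by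
            intro hle
            apply him
            refine le_antisymm ?_ hle
            simp only [hm, Fin.le_def]
            have := i.isLt
            omega
          have hmem : Matrix.single m i (1 : K) ∈ Rset n K J :=
            stdBasis_mem (fun hle => absurd hle hlt)
          have := (h _ hmem).2
          have := congrFun (congrFun this m) z
          simpa using this
        · -- k ≠ z, use X = stdBasisMatrix k z 1
          have hlt : ¬ (k ≤ z) := by
            rw [Fin.le_def]
            intro hle
            exact hkz (Fin.ext (by rw [hz] at hle ⊢; simp only [Fin.val_mk] at hle ⊢; omega))
          have hmem : Matrix.single k z (1 : K) ∈ Rset n K J :=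
            stdBasis_mem (fun hle => absurd hle hlt)
          have := (h _ hmem).1
          have := congrFun (congrFun this i) z
          simpa using this
  · rintro ⟨a, ha, rfl⟩
    intro X hX
    constructor
    · ext i k
      rcases eq_or_ne i m with rfl | him
      · rw [Matrix.single_mul_apply_same]
        have : X z k ∈ J := hX z k (by rw [hz, Fin.le_def]; simp only [Fin.val_mk]; omega)
        simpa using (ha _ this).1
      · simp [Matrix.single_mul_apply_of_ne _ _ _ _ _ him]
    · ext i k
      rcases eq_or_ne k z with rfl | hkz
      · rw [Matrix.mul_single_apply_same]
        have : X i m ∈ J := hX i m (by rw [hm, Fin.le_def]; simp only [Fin.val_mk]; have := i.isLt; omega)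
        simpa using (ha _ this).2
      · simp [Matrix.mul_single_apply_of_ne _ _ _ _ _ hkz]
end

section
/- Let α, β, γ : J → Ann_K J be additive group homomorphisms with α(J²) = β(J²) = γ(J²) = 0, satisfying α(yx) = xα(y), β(yx) = xβ(y), β(xy) = β(y)x, and γ(xy) = γ(y)x for all x ∈ K, y ∈ J. Then the additive map Ω on R_n(K,J) defined on generators by Ω(y e_{1,n}) = α(y)e_{n-1,1} + β(y)e_{n-1,2} + γ(y)e_{n,2}, Ω(y e_{1,n-1}) = α(y)e_{n,1} + β(y)e_{n,2}, Ω(y e_{2,n-1}) = β(y)e_{n,1}, Ω(y e_{2,n}) = β(y)e_{n-1,1} + γ(y)e_{n,1}, and Ω(x e_{i,j}) = 0 on all other elementary matrices of R, is a Jordan derivation of R_n(K,J). -/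
open Matrix

set_option linter.unreachableTactic false
set_option linter.unusedTactic false

lemma std_mul_apply' {n : ℕ} {K : Type} [Ring K] (i j : Fin n) (v : K)
    (M : Matrix (Fin n) (Fin n) K) (r s : Fin n) :
    (Matrix.single i j v * M) r s = if r = i then v * M j s else 0 := by
  rw [Matrix.mul_apply]
  by_cases h : r = i
  · subst h
    rw [if_pos rfl]
    rw [Finset.sum_eq_single j]
    · simp [Matrix.single]
    · intro k _ hk; simp [Matrix.single, (Ne.symm hk)]
    · simp
  · rw [if_neg h]
    apply Finset.sum_eq_zero
    intro k _
    simp [Matrix.single, Ne.symm h]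

lemma mul_std_apply' {n : ℕ} {K : Type} [Ring K] (i j : Fin n) (v : K)
    (M : Matrix (Fin n) (Fin n) K) (r s : Fin n) :
    (M * Matrix.single i j v) r s = if s = j then M r i * v else 0 := by
  rw [Matrix.mul_apply]
  by_cases h : s = j
  · subst h
    rw [if_pos rfl]
    rw [Finset.sum_eq_single i]
    · simp [Matrix.single]
    · intro k _ hk; simp [Matrix.single, (Ne.symm hk)]
    · simp
  · rw [if_neg h]
    apply Finset.sum_eq_zero
    intro k _
    simp [Matrix.single, Ne.symm h]

lemma std_mul_zero' {n : ℕ} {K : Type} [Ring K] (i j : Fin n) (v : K)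
    (M : Matrix (Fin n) (Fin n) K) (h : ∀ s, v * M j s = 0) :
    Matrix.single i j v * M = 0 := by
  ext r s
  rw [std_mul_apply']
  split <;> simp [h]

lemma std_mul_eq' {n : ℕ} {K : Type} [Ring K] (i j j' : Fin n) (v : K)
    (M : Matrix (Fin n) (Fin n) K) (h : ∀ s, s ≠ j' → v * M j s = 0) :
    Matrix.single i j v * M = Matrix.single i j' (v * M j j') := by
  ext r s
  rw [std_mul_apply']
  by_cases h1 : r = i
  · subst h1
    by_cases h2 : s = j'
    · subst h2; simp [Matrix.single]
    · simp [Matrix.single, h2, Ne.symm h2, h s h2]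
  · simp [Matrix.single, h1, Ne.symm h1]

lemma mul_std_zero' {n : ℕ} {K : Type} [Ring K] (i j : Fin n) (v : K)
    (M : Matrix (Fin n) (Fin n) K) (h : ∀ r, M r i * v = 0) :
    M * Matrix.single i j v = 0 := by
  ext r s
  rw [mul_std_apply']
  split <;> simp [h]

lemma mul_std_eq' {n : ℕ} {K : Type} [Ring K] (i i' j : Fin n) (v : K)
    (M : Matrix (Fin n) (Fin n) K) (h : ∀ r, r ≠ i' → M r i * v = 0) :
    M * Matrix.single i j v = Matrix.single i' j (M i' i * v) := by
  ext r s
  rw [mul_std_apply']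
  by_cases h1 : s = j
  · subst h1
    by_cases h2 : r = i'
    · subst h2; simp [Matrix.single]
    · simp [Matrix.single, h2, Ne.symm h2, h r h2]
  · simp [Matrix.single, h1, Ne.symm h1]

lemma map_sum_J {K : Type} [Ring K] {J : TwoSidedIdeal K} (f : K → K)
    (hadd : ∀ y ∈ J, ∀ z ∈ J, f (y + z) = f y + f z) {ι : Type} (s : Finset ι)
    (g : ι → K) (hg : ∀ k ∈ s, g k ∈ J) :
    f (∑ k ∈ s, g k) = ∑ k ∈ s, f (g k) := by
  have h0 : f 0 = 0 := by
    have h := hadd 0 J.zero_mem 0 J.zero_mem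
    rw [add_zero] at h
    exact (left_eq_add.mp h)
  classical
  induction s using Finset.induction with
  | empty => simpa
  | @insert a t hns ih =>
    rw [Finset.sum_insert hns, Finset.sum_insert hns,
      hadd _ (hg a (Finset.mem_insert_self a t))
        _ (J.finsetSum_mem _ _ fun k hk => hg k (Finset.mem_insert_of_mem hk)),
      ih fun k hk => hg k (Finset.mem_insert_of_mem hk)]

section vals
variable {K : Type} [Ring K] {J : TwoSidedIdeal K} {n : ℕ}

lemma prod_mem_J (a b : Matrix (Fin n) (Fin n) K)
    (haJ : ∀ i j : Fin n, (i:ℕ) ≤ (j:ℕ) → a i j ∈ J)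
    (hbJ : ∀ i j : Fin n, (i:ℕ) ≤ (j:ℕ) → b i j ∈ J)
    (i j : Fin n) (hij : (i:ℕ) ≤ (j:ℕ)) (k : Fin n) :
    a i k * b k j ∈ J := by
  rcases le_or_gt (i:ℕ) (k:ℕ) with h | h
  · exact J.mul_mem_right _ _ (haJ i k h)
  · exact J.mul_mem_left _ _ (hbJ k j (by omega))

lemma entry_split (f : K → K) (a b : Matrix (Fin n) (Fin n) K)
    (hadd : ∀ y ∈ J, ∀ z ∈ J, f (y + z) = f y + f z)
    (haJ : ∀ i j : Fin n, (i:ℕ) ≤ (j:ℕ) → a i j ∈ J)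
    (hbJ : ∀ i j : Fin n, (i:ℕ) ≤ (j:ℕ) → b i j ∈ J)
    (i j : Fin n) (hij : (i:ℕ) ≤ (j:ℕ)) :
    f ((a * b + b * a) i j) = ∑ k, (f (a i k * b k j) + f (b i k * a k j)) := by
  have m1 := prod_mem_J a b haJ hbJ i j hij
  have m2 := prod_mem_J b a hbJ haJ i j hij
  rw [Matrix.add_apply, Matrix.mul_apply, Matrix.mul_apply, ← Finset.sum_add_distrib,
    map_sum_J f hadd _ _ (fun k _ => J.add_mem (m1 k) (m2 k))]
  exact Finset.sum_congr rfl fun k _ => hadd _ (m1 k) _ (m2 k)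
end vals

section vals2
variable {K : Type} [Ring K] {J : TwoSidedIdeal K} {n : ℕ}

variable (hn : 3 < n) (f : K → K) (a b : Matrix (Fin n) (Fin n) K)
variable (hadd : ∀ y ∈ J, ∀ z ∈ J, f (y + z) = f y + f z)
variable (hsq : ∀ y ∈ J, ∀ z ∈ J, f (y * z) = 0)
variable (haJ : ∀ i j : Fin n, (i:ℕ) ≤ (j:ℕ) → a i j ∈ J)
variable (hbJ : ∀ i j : Fin n, (i:ℕ) ≤ (j:ℕ) → b i j ∈ J)

include hn hadd hsq haJ hbJ

lemma val_0q :
    f ((a * b + b * a) ⟨0, by omega⟩ ⟨n - 1, by omega⟩) = 0 := by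
  rw [entry_split f a b hadd haJ hbJ _ _ (by first | (simp; omega) | simp | omega)]
  apply Finset.sum_eq_zero
  intro k _
  rw [hsq _ (haJ _ k (by simp)) _ (hbJ k _ (by first | (simp; omega) | simp | omega)),
    hsq _ (hbJ _ k (by simp)) _ (haJ k _ (by first | (simp; omega) | simp | omega)), add_zero]

lemma val_1q (hx2 : ∀ x : K, ∀ y ∈ J, f (x * y) = f y * x) :
    f ((a * b + b * a) ⟨1, by omega⟩ ⟨n - 1, by omega⟩) =
      f (b ⟨0, by omega⟩ ⟨n - 1, by omega⟩) * a ⟨1, by omega⟩ ⟨0, by omega⟩ +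
      f (a ⟨0, by omega⟩ ⟨n - 1, by omega⟩) * b ⟨1, by omega⟩ ⟨0, by omega⟩ := by
  rw [entry_split f a b hadd haJ hbJ _ _ (by first | (simp; omega) | simp | omega)]
  rw [Fintype.sum_eq_single (⟨0, by omega⟩ : Fin n)]
  · rw [hx2 _ _ (hbJ _ _ (by first | (simp; omega) | simp | omega)), hx2 _ _ (haJ _ _ (by first | (simp; omega) | simp | omega))]
  · intro k hk
    have hk0 : (k:ℕ) ≠ 0 := fun h => hk (Fin.ext h)
    rw [hsq _ (haJ _ k (by first | (simp; omega) | simp | omega)) _ (hbJ k _ (by first | (simp; omega) | simp | omega)),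
      hsq _ (hbJ _ k (by first | (simp; omega) | simp | omega)) _ (haJ k _ (by first | (simp; omega) | simp | omega)), add_zero]

lemma val_0p (hx1 : ∀ x : K, ∀ y ∈ J, f (y * x) = x * f y) :
    f ((a * b + b * a) ⟨0, by omega⟩ ⟨n - 2, by omega⟩) =
      b ⟨n - 1, by omega⟩ ⟨n - 2, by omega⟩ * f (a ⟨0, by omega⟩ ⟨n - 1, by omega⟩) +
      a ⟨n - 1, by omega⟩ ⟨n - 2, by omega⟩ * f (b ⟨0, by omega⟩ ⟨n - 1, by omega⟩) := by
  rw [entry_split f a b hadd haJ hbJ _ _ (by simp)]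
  rw [Fintype.sum_eq_single (⟨n - 1, by omega⟩ : Fin n)]
  · rw [hx1 _ _ (haJ _ _ (by simp)), hx1 _ _ (hbJ _ _ (by simp))]
  · intro k hk
    have hk0 : (k:ℕ) ≠ n - 1 := fun h => hk (Fin.ext h)
    have hkn : (k:ℕ) ≤ n - 2 := by have := k.isLt; omega
    rw [hsq _ (haJ _ k (by simp)) _ (hbJ k _ (by simpa using hkn)),
      hsq _ (hbJ _ k (by simp)) _ (haJ k _ (by simpa using hkn)), add_zero]

lemma val_1p (hx1 : ∀ x : K, ∀ y ∈ J, f (y * x) = x * f y)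
    (hx2 : ∀ x : K, ∀ y ∈ J, f (x * y) = f y * x) :
    f ((a * b + b * a) ⟨1, by omega⟩ ⟨n - 2, by omega⟩) =
      (f (b ⟨0, by omega⟩ ⟨n - 2, by omega⟩) * a ⟨1, by omega⟩ ⟨0, by omega⟩ +
       f (a ⟨0, by omega⟩ ⟨n - 2, by omega⟩) * b ⟨1, by omega⟩ ⟨0, by omega⟩) +
      (b ⟨n - 1, by omega⟩ ⟨n - 2, by omega⟩ * f (a ⟨1, by omega⟩ ⟨n - 1, by omega⟩) +
       a ⟨n - 1, by omega⟩ ⟨n - 2, by omega⟩ * f (b ⟨1, by omega⟩ ⟨n - 1, by omega⟩)) := by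
  rw [entry_split f a b hadd haJ hbJ _ _ (by first | (simp; omega) | simp | omega)]
  rw [← Finset.sum_subset (Finset.subset_univ {(⟨0, by omega⟩ : Fin n), ⟨n - 1, by omega⟩})]
  · rw [Finset.sum_pair (by intro h; rw [Fin.mk.injEq] at h; omega)]
    rw [hx2 _ _ (hbJ _ _ (by first | (simp; omega) | simp | omega)), hx2 _ _ (haJ _ _ (by first | (simp; omega) | simp | omega)),
      hx1 _ _ (haJ _ _ (by first | (simp; omega) | simp | omega)), hx1 _ _ (hbJ _ _ (by first | (simp; omega) | simp | omega))]
  · intro k _ hk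
    simp only [Finset.mem_insert, Finset.mem_singleton] at hk
    push_neg at hk
    have hk0 : (k:ℕ) ≠ 0 := fun h => hk.1 (Fin.ext h)
    have hk1 : (k:ℕ) ≠ n - 1 := fun h => hk.2 (Fin.ext h)
    have hkn : (k:ℕ) ≤ n - 2 := by have := k.isLt; omega
    rw [hsq _ (haJ _ k (by first | (simp; omega) | simp | omega)) _ (hbJ k _ (by simpa using hkn)),
      hsq _ (hbJ _ k (by first | (simp; omega) | simp | omega)) _ (haJ k _ (by simpa using hkn)), add_zero]

end vals2

def Dm (n : ℕ) (hn : 3 < n) {K : Type} [Ring K] (α β γ : K → K)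
    (M : Matrix (Fin n) (Fin n) K) : Matrix (Fin n) (Fin n) K :=
  Matrix.single ⟨n - 2, by omega⟩ ⟨0, by omega⟩ (α (M ⟨0, by omega⟩ ⟨n - 1, by omega⟩)) +
  Matrix.single ⟨n - 2, by omega⟩ ⟨1, by omega⟩ (β (M ⟨0, by omega⟩ ⟨n - 1, by omega⟩)) +
  Matrix.single ⟨n - 1, by omega⟩ ⟨1, by omega⟩ (γ (M ⟨0, by omega⟩ ⟨n - 1, by omega⟩)) +
  Matrix.single ⟨n - 1, by omega⟩ ⟨0, by omega⟩ (α (M ⟨0, by omega⟩ ⟨n - 2, by omega⟩)) +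
  Matrix.single ⟨n - 1, by omega⟩ ⟨1, by omega⟩ (β (M ⟨0, by omega⟩ ⟨n - 2, by omega⟩)) +
  Matrix.single ⟨n - 1, by omega⟩ ⟨0, by omega⟩ (β (M ⟨1, by omega⟩ ⟨n - 2, by omega⟩)) +
  Matrix.single ⟨n - 2, by omega⟩ ⟨0, by omega⟩ (β (M ⟨1, by omega⟩ ⟨n - 1, by omega⟩)) +
  Matrix.single ⟨n - 1, by omega⟩ ⟨0, by omega⟩ (γ (M ⟨1, by omega⟩ ⟨n - 1, by omega⟩))

lemma Dm_mem {n : ℕ} (hn : 3 < n) {K : Type} [Ring K] {J : TwoSidedIdeal K}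
    (α β γ : K → K) (M : Matrix (Fin n) (Fin n) K) :
    Dm n hn α β γ M ∈ Rset n K J := by
  unfold Dm
  refine add_mem (add_mem (add_mem (add_mem (add_mem (add_mem (add_mem ?_ ?_) ?_) ?_) ?_) ?_) ?_) ?_ <;>
    exact stdBasis_mem (fun h => absurd (Fin.mk_le_mk.mp h) (by omega))

lemma Dm_add {n : ℕ} (hn : 3 < n) {K : Type} [Ring K] {J : TwoSidedIdeal K}
    (α β γ : K → K)
    (haddα : ∀ y ∈ J, ∀ z ∈ J, α (y + z) = α y + α z)
    (haddβ : ∀ y ∈ J, ∀ z ∈ J, β (y + z) = β y + β z)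
    (haddγ : ∀ y ∈ J, ∀ z ∈ J, γ (y + z) = γ y + γ z)
    (a b : Matrix (Fin n) (Fin n) K)
    (haJ : ∀ i j : Fin n, (i:ℕ) ≤ (j:ℕ) → a i j ∈ J)
    (hbJ : ∀ i j : Fin n, (i:ℕ) ≤ (j:ℕ) → b i j ∈ J) :
    Dm n hn α β γ (a + b) = Dm n hn α β γ a + Dm n hn α β γ b := by
  unfold Dm
  have h1 : ((0:ℕ)) ≤ n - 1 := by omega
  have h2 : ((0:ℕ)) ≤ n - 2 := by omega
  have h3 : ((1:ℕ)) ≤ n - 2 := by omega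
  have h4 : ((1:ℕ)) ≤ n - 1 := by omega
  rw [Matrix.add_apply, Matrix.add_apply, Matrix.add_apply, Matrix.add_apply,
    haddα _ (haJ _ _ h1) _ (hbJ _ _ h1), haddβ _ (haJ _ _ h1) _ (hbJ _ _ h1),
    haddγ _ (haJ _ _ h1) _ (hbJ _ _ h1), haddα _ (haJ _ _ h2) _ (hbJ _ _ h2),
    haddβ _ (haJ _ _ h2) _ (hbJ _ _ h2), haddβ _ (haJ _ _ h3) _ (hbJ _ _ h3),
    haddβ _ (haJ _ _ h4) _ (hbJ _ _ h4), haddγ _ (haJ _ _ h4) _ (hbJ _ _ h4)]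
  simp only [Matrix.single_add]
  abel

section prods
variable {n : ℕ} (hn : 3 < n) {K : Type} [Ring K] {J : TwoSidedIdeal K}

lemma key_col0 (i : Fin n) (v : K) (hv : ∀ t ∈ J, v * t = 0)
    (b : Matrix (Fin n) (Fin n) K)
    (hbJ : ∀ i j : Fin n, (i:ℕ) ≤ (j:ℕ) → b i j ∈ J) :
    Matrix.single i ⟨0, by omega⟩ v * b = 0 :=
  std_mul_zero' _ _ _ _ fun s => hv _ (hbJ _ s (by simp))

lemma key_col1 (i : Fin n) (v : K) (hv : ∀ t ∈ J, v * t = 0)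
    (b : Matrix (Fin n) (Fin n) K)
    (hbJ : ∀ i j : Fin n, (i:ℕ) ≤ (j:ℕ) → b i j ∈ J) :
    Matrix.single i ⟨1, by omega⟩ v * b =
      Matrix.single i ⟨0, by omega⟩ (v * b ⟨1, by omega⟩ ⟨0, by omega⟩) :=
  std_mul_eq' _ _ _ _ _ fun s hs => hv _ (hbJ _ s (by
    have : (s:ℕ) ≠ 0 := fun h => hs (Fin.ext h)
    simp; omega))

lemma key_rowlast (j : Fin n) (v : K) (hv : ∀ t ∈ J, t * v = 0)
    (b : Matrix (Fin n) (Fin n) K)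
    (hbJ : ∀ i j : Fin n, (i:ℕ) ≤ (j:ℕ) → b i j ∈ J) :
    b * Matrix.single ⟨n - 1, by omega⟩ j v = 0 :=
  mul_std_zero' _ _ _ _ fun r => hv _ (hbJ r _ (by simp; have := r.isLt; omega))

lemma key_rowpen (j : Fin n) (v : K) (hv : ∀ t ∈ J, t * v = 0)
    (b : Matrix (Fin n) (Fin n) K)
    (hbJ : ∀ i j : Fin n, (i:ℕ) ≤ (j:ℕ) → b i j ∈ J) :
    b * Matrix.single ⟨n - 2, by omega⟩ j v =
      Matrix.single ⟨n - 1, by omega⟩ j (b ⟨n - 1, by omega⟩ ⟨n - 2, by omega⟩ * v) :=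
  mul_std_eq' _ _ _ _ _ fun r hr => hv _ (hbJ r _ (by
    have : (r:ℕ) ≠ n - 1 := fun h => hr (Fin.ext h)
    have := r.isLt
    simp; omega))

end prods

set_option maxHeartbeats 2000000 in
lemma Dm_jordan {n : ℕ} (hn : 3 < n) {K : Type} [Ring K] {J : TwoSidedIdeal K}
    (α β γ : K → K)
    (haddα : ∀ y ∈ J, ∀ z ∈ J, α (y + z) = α y + α z)
    (haddβ : ∀ y ∈ J, ∀ z ∈ J, β (y + z) = β y + β z)
    (haddγ : ∀ y ∈ J, ∀ z ∈ J, γ (y + z) = γ y + γ z)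
    (hannα : ∀ y ∈ J, ∀ t ∈ J, α y * t = 0 ∧ t * α y = 0)
    (hannβ : ∀ y ∈ J, ∀ t ∈ J, β y * t = 0 ∧ t * β y = 0)
    (hannγ : ∀ y ∈ J, ∀ t ∈ J, γ y * t = 0 ∧ t * γ y = 0)
    (hsqα : ∀ y ∈ J, ∀ z ∈ J, α (y * z) = 0)
    (hsqβ : ∀ y ∈ J, ∀ z ∈ J, β (y * z) = 0)
    (hsqγ : ∀ y ∈ J, ∀ z ∈ J, γ (y * z) = 0)
    (hα : ∀ x : K, ∀ y ∈ J, α (y * x) = x * α y)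
    (hβ1 : ∀ x : K, ∀ y ∈ J, β (y * x) = x * β y)
    (hβ2 : ∀ x : K, ∀ y ∈ J, β (x * y) = β y * x)
    (hγ : ∀ x : K, ∀ y ∈ J, γ (x * y) = γ y * x)
    (a b : Matrix (Fin n) (Fin n) K)
    (haJ : ∀ i j : Fin n, (i:ℕ) ≤ (j:ℕ) → a i j ∈ J)
    (hbJ : ∀ i j : Fin n, (i:ℕ) ≤ (j:ℕ) → b i j ∈ J) :
    Dm n hn α β γ (a * b + b * a) =
      Dm n hn α β γ a * b + b * Dm n hn α β γ a + a * Dm n hn α β γ b +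
        Dm n hn α β γ b * a := by
  have ja0q : a ⟨0, by omega⟩ ⟨n - 1, by omega⟩ ∈ J := haJ _ _ (by show (0:ℕ) ≤ n - 1; omega)
  have ja0p : a ⟨0, by omega⟩ ⟨n - 2, by omega⟩ ∈ J := haJ _ _ (by show (0:ℕ) ≤ n - 2; omega)
  have ja1p : a ⟨1, by omega⟩ ⟨n - 2, by omega⟩ ∈ J := haJ _ _ (by show (1:ℕ) ≤ n - 2; omega)
  have ja1q : a ⟨1, by omega⟩ ⟨n - 1, by omega⟩ ∈ J := haJ _ _ (by show (1:ℕ) ≤ n - 1; omega)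
  have jb0q : b ⟨0, by omega⟩ ⟨n - 1, by omega⟩ ∈ J := hbJ _ _ (by show (0:ℕ) ≤ n - 1; omega)
  have jb0p : b ⟨0, by omega⟩ ⟨n - 2, by omega⟩ ∈ J := hbJ _ _ (by show (0:ℕ) ≤ n - 2; omega)
  have jb1p : b ⟨1, by omega⟩ ⟨n - 2, by omega⟩ ∈ J := hbJ _ _ (by show (1:ℕ) ≤ n - 2; omega)
  have jb1q : b ⟨1, by omega⟩ ⟨n - 1, by omega⟩ ∈ J := hbJ _ _ (by show (1:ℕ) ≤ n - 1; omega)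
  have e1 : Dm n hn α β γ a * b =
      Matrix.single ⟨n - 2, by omega⟩ ⟨0, by omega⟩
        (β (a ⟨0, by omega⟩ ⟨n - 1, by omega⟩) * b ⟨1, by omega⟩ ⟨0, by omega⟩) +
      Matrix.single ⟨n - 1, by omega⟩ ⟨0, by omega⟩
        (γ (a ⟨0, by omega⟩ ⟨n - 1, by omega⟩) * b ⟨1, by omega⟩ ⟨0, by omega⟩) +
      Matrix.single ⟨n - 1, by omega⟩ ⟨0, by omega⟩
        (β (a ⟨0, by omega⟩ ⟨n - 2, by omega⟩) * b ⟨1, by omega⟩ ⟨0, by omega⟩) := by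
    unfold Dm
    rw [add_mul, add_mul, add_mul, add_mul, add_mul, add_mul, add_mul]
    rw [key_col0 hn _ _ (fun t ht => (hannα _ ja0q t ht).1) b hbJ,
      key_col1 hn _ _ (fun t ht => (hannβ _ ja0q t ht).1) b hbJ,
      key_col1 hn _ _ (fun t ht => (hannγ _ ja0q t ht).1) b hbJ,
      key_col0 hn _ _ (fun t ht => (hannα _ ja0p t ht).1) b hbJ,
      key_col1 hn _ _ (fun t ht => (hannβ _ ja0p t ht).1) b hbJ,
      key_col0 hn _ _ (fun t ht => (hannβ _ ja1p t ht).1) b hbJ,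
      key_col0 hn _ _ (fun t ht => (hannβ _ ja1q t ht).1) b hbJ,
      key_col0 hn _ _ (fun t ht => (hannγ _ ja1q t ht).1) b hbJ]
    abel
  have e2 : b * Dm n hn α β γ a =
      Matrix.single ⟨n - 1, by omega⟩ ⟨0, by omega⟩
        (b ⟨n - 1, by omega⟩ ⟨n - 2, by omega⟩ * α (a ⟨0, by omega⟩ ⟨n - 1, by omega⟩)) +
      Matrix.single ⟨n - 1, by omega⟩ ⟨1, by omega⟩
        (b ⟨n - 1, by omega⟩ ⟨n - 2, by omega⟩ * β (a ⟨0, by omega⟩ ⟨n - 1, by omega⟩)) +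
      Matrix.single ⟨n - 1, by omega⟩ ⟨0, by omega⟩
        (b ⟨n - 1, by omega⟩ ⟨n - 2, by omega⟩ * β (a ⟨1, by omega⟩ ⟨n - 1, by omega⟩)) := by
    unfold Dm
    rw [mul_add, mul_add, mul_add, mul_add, mul_add, mul_add, mul_add]
    rw [key_rowpen hn _ _ (fun t ht => (hannα _ ja0q t ht).2) b hbJ,
      key_rowpen hn _ _ (fun t ht => (hannβ _ ja0q t ht).2) b hbJ,
      key_rowlast hn _ _ (fun t ht => (hannγ _ ja0q t ht).2) b hbJ,
      key_rowlast hn _ _ (fun t ht => (hannα _ ja0p t ht).2) b hbJ,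
      key_rowlast hn _ _ (fun t ht => (hannβ _ ja0p t ht).2) b hbJ,
      key_rowlast hn _ _ (fun t ht => (hannβ _ ja1p t ht).2) b hbJ,
      key_rowpen hn _ _ (fun t ht => (hannβ _ ja1q t ht).2) b hbJ,
      key_rowlast hn _ _ (fun t ht => (hannγ _ ja1q t ht).2) b hbJ]
    abel
  have e3 : a * Dm n hn α β γ b =
      Matrix.single ⟨n - 1, by omega⟩ ⟨0, by omega⟩
        (a ⟨n - 1, by omega⟩ ⟨n - 2, by omega⟩ * α (b ⟨0, by omega⟩ ⟨n - 1, by omega⟩)) +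
      Matrix.single ⟨n - 1, by omega⟩ ⟨1, by omega⟩
        (a ⟨n - 1, by omega⟩ ⟨n - 2, by omega⟩ * β (b ⟨0, by omega⟩ ⟨n - 1, by omega⟩)) +
      Matrix.single ⟨n - 1, by omega⟩ ⟨0, by omega⟩
        (a ⟨n - 1, by omega⟩ ⟨n - 2, by omega⟩ * β (b ⟨1, by omega⟩ ⟨n - 1, by omega⟩)) := by
    unfold Dm
    rw [mul_add, mul_add, mul_add, mul_add, mul_add, mul_add, mul_add]
    rw [key_rowpen hn _ _ (fun t ht => (hannα _ jb0q t ht).2) a haJ,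
      key_rowpen hn _ _ (fun t ht => (hannβ _ jb0q t ht).2) a haJ,
      key_rowlast hn _ _ (fun t ht => (hannγ _ jb0q t ht).2) a haJ,
      key_rowlast hn _ _ (fun t ht => (hannα _ jb0p t ht).2) a haJ,
      key_rowlast hn _ _ (fun t ht => (hannβ _ jb0p t ht).2) a haJ,
      key_rowlast hn _ _ (fun t ht => (hannβ _ jb1p t ht).2) a haJ,
      key_rowpen hn _ _ (fun t ht => (hannβ _ jb1q t ht).2) a haJ,
      key_rowlast hn _ _ (fun t ht => (hannγ _ jb1q t ht).2) a haJ]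
    abel
  have e4 : Dm n hn α β γ b * a =
      Matrix.single ⟨n - 2, by omega⟩ ⟨0, by omega⟩
        (β (b ⟨0, by omega⟩ ⟨n - 1, by omega⟩) * a ⟨1, by omega⟩ ⟨0, by omega⟩) +
      Matrix.single ⟨n - 1, by omega⟩ ⟨0, by omega⟩
        (γ (b ⟨0, by omega⟩ ⟨n - 1, by omega⟩) * a ⟨1, by omega⟩ ⟨0, by omega⟩) +
      Matrix.single ⟨n - 1, by omega⟩ ⟨0, by omega⟩
        (β (b ⟨0, by omega⟩ ⟨n - 2, by omega⟩) * a ⟨1, by omega⟩ ⟨0, by omega⟩) := by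
    unfold Dm
    rw [add_mul, add_mul, add_mul, add_mul, add_mul, add_mul, add_mul]
    rw [key_col0 hn _ _ (fun t ht => (hannα _ jb0q t ht).1) a haJ,
      key_col1 hn _ _ (fun t ht => (hannβ _ jb0q t ht).1) a haJ,
      key_col1 hn _ _ (fun t ht => (hannγ _ jb0q t ht).1) a haJ,
      key_col0 hn _ _ (fun t ht => (hannα _ jb0p t ht).1) a haJ,
      key_col1 hn _ _ (fun t ht => (hannβ _ jb0p t ht).1) a haJ,
      key_col0 hn _ _ (fun t ht => (hannβ _ jb1p t ht).1) a haJ,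
      key_col0 hn _ _ (fun t ht => (hannβ _ jb1q t ht).1) a haJ,
      key_col0 hn _ _ (fun t ht => (hannγ _ jb1q t ht).1) a haJ]
    abel
  rw [e1, e2, e3, e4]
  unfold Dm
  rw [val_0q hn α a b haddα hsqα haJ hbJ,
    val_0q hn β a b haddβ hsqβ haJ hbJ,
    val_0q hn γ a b haddγ hsqγ haJ hbJ,
    val_0p hn α a b haddα hsqα haJ hbJ hα,
    val_0p hn β a b haddβ hsqβ haJ hbJ hβ1,
    val_1p hn β a b haddβ hsqβ haJ hbJ hβ1 hβ2,
    val_1q hn β a b haddβ hsqβ haJ hbJ hβ2,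
    val_1q hn γ a b haddγ hsqγ haJ hbJ hγ]
  simp only [Matrix.single_add, Matrix.single_zero]
  abel

/-- the extremal map `Ω` is a Jordan derivation of `R_n(K,J)`. -/
theorem extremal_is_jordan_derivation (n : ℕ) (hn : 4 ≤ n) (K : Type) [Ring K]
    (J : TwoSidedIdeal K) (α β γ : K → K)
    (haddα : ∀ y ∈ J, ∀ z ∈ J, α (y + z) = α y + α z)
    (haddβ : ∀ y ∈ J, ∀ z ∈ J, β (y + z) = β y + β z)
    (haddγ : ∀ y ∈ J, ∀ z ∈ J, γ (y + z) = γ y + γ z)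
    (hannα : ∀ y ∈ J, ∀ t ∈ J, α y * t = 0 ∧ t * α y = 0)
    (hannβ : ∀ y ∈ J, ∀ t ∈ J, β y * t = 0 ∧ t * β y = 0)
    (hannγ : ∀ y ∈ J, ∀ t ∈ J, γ y * t = 0 ∧ t * γ y = 0)
    (hsqα : ∀ y ∈ J, ∀ z ∈ J, α (y * z) = 0)
    (hsqβ : ∀ y ∈ J, ∀ z ∈ J, β (y * z) = 0)
    (hsqγ : ∀ y ∈ J, ∀ z ∈ J, γ (y * z) = 0)
    (hα : ∀ x : K, ∀ y ∈ J, α (y * x) = x * α y)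
    (hβ1 : ∀ x : K, ∀ y ∈ J, β (y * x) = x * β y)
    (hβ2 : ∀ x : K, ∀ y ∈ J, β (x * y) = β y * x)
    (hγ : ∀ x : K, ∀ y ∈ J, γ (x * y) = γ y * x) :
    ∃ Ω : ↥(Rset n K J) → ↥(Rset n K J),
      (∀ M : ↥(Rset n K J),
        (↑(Ω M) : Matrix (Fin n) (Fin n) K) =
          Matrix.single ⟨n - 2, by omega⟩ ⟨0, by omega⟩
            (α ((M : Matrix (Fin n) (Fin n) K) ⟨0, by omega⟩ ⟨n - 1, by omega⟩)) +
          Matrix.single ⟨n - 2, by omega⟩ ⟨1, by omega⟩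
            (β ((M : Matrix (Fin n) (Fin n) K) ⟨0, by omega⟩ ⟨n - 1, by omega⟩)) +
          Matrix.single ⟨n - 1, by omega⟩ ⟨1, by omega⟩
            (γ ((M : Matrix (Fin n) (Fin n) K) ⟨0, by omega⟩ ⟨n - 1, by omega⟩)) +
          Matrix.single ⟨n - 1, by omega⟩ ⟨0, by omega⟩
            (α ((M : Matrix (Fin n) (Fin n) K) ⟨0, by omega⟩ ⟨n - 2, by omega⟩)) +
          Matrix.single ⟨n - 1, by omega⟩ ⟨1, by omega⟩
            (β ((M : Matrix (Fin n) (Fin n) K) ⟨0, by omega⟩ ⟨n - 2, by omega⟩)) +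
          Matrix.single ⟨n - 1, by omega⟩ ⟨0, by omega⟩
            (β ((M : Matrix (Fin n) (Fin n) K) ⟨1, by omega⟩ ⟨n - 2, by omega⟩)) +
          Matrix.single ⟨n - 2, by omega⟩ ⟨0, by omega⟩
            (β ((M : Matrix (Fin n) (Fin n) K) ⟨1, by omega⟩ ⟨n - 1, by omega⟩)) +
          Matrix.single ⟨n - 1, by omega⟩ ⟨0, by omega⟩
            (γ ((M : Matrix (Fin n) (Fin n) K) ⟨1, by omega⟩ ⟨n - 1, by omega⟩))) ∧
      (∀ a b : ↥(Rset n K J), Ω (a + b) = Ω a + Ω b) ∧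
      (∀ a b : ↥(Rset n K J),
        Ω (a * b + b * a) = Ω a * b + b * Ω a + a * Ω b + Ω b * a) := by
  refine ⟨fun M => ⟨Dm n hn α β γ (↑M), Dm_mem hn α β γ (↑M)⟩, fun M => rfl, ?_, ?_⟩
  · intro a b
    apply Subtype.ext
    exact Dm_add hn α β γ haddα haddβ haddγ (↑a) (↑b)
      (fun i j h => a.2 i j h) (fun i j h => b.2 i j h)
  · intro a b
    apply Subtype.ext
    exact Dm_jordan hn α β γ haddα haddβ haddγ hannα hannβ hannγ hsqα hsqβ hsqγ
      hα hβ1 hβ2 hγ (↑a) (↑b) (fun i j h => a.2 i j h) (fun i j h => b.2 i j h)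
end

section
/- Let Δ be a Jordan derivation of R = R_n(K,J) with n ≥ 4 and K 2-torsion free. Fix (i,j) and write Δ(x e_{i,j}) = Σ_{s,t} Δ^{i,j}_{s,t}(x) e_{s,t}. If k > s > m with k, s, m all distinct from both i and j, then Δ^{i,j}_{k,k}(x) = Δ^{i,j}_{s,s}(x) = Δ^{i,j}_{m,m}(x) = 0 for all x ∈ I_{i,j}. -/
open Matrix

lemma stdBasis_mem_lower {n : ℕ} {K : Type} [Ring K] {J : TwoSidedIdeal K}
    {i j : Fin n} (h : j < i) (y : K) :
    Matrix.single i j y ∈ Rset n K J :=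
  stdBasis_mem fun hle => absurd hle (not_le.mpr h)

lemma key_diag {n : ℕ} {K : Type} [Ring K] {J : TwoSidedIdeal K}
    (Δ : ↥(Rset n K J) → ↥(Rset n K J))
    (hadd : ∀ a b : ↥(Rset n K J), Δ (a + b) = Δ a + Δ b)
    (hjord : ∀ a b : ↥(Rset n K J),
      Δ (a * b + b * a) = Δ a * b + b * Δ a + a * Δ b + Δ b * a)
    (i j p q : Fin n) (hqp : q < p)
    (hpi : p ≠ i) (hpj : p ≠ j) (hqi : q ≠ i) (hqj : q ≠ j)
    (x : K) (hx : i ≤ j → x ∈ J) :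
    (↑(Δ ⟨Matrix.single i j x, stdBasis_mem hx⟩) : Matrix (Fin n) (Fin n) K) q q
      + (↑(Δ ⟨Matrix.single i j x, stdBasis_mem hx⟩) : Matrix (Fin n) (Fin n) K) p p
      = 0 := by
  set b : ↥(Rset n K J) := ⟨Matrix.single i j x, stdBasis_mem hx⟩ with hb
  set a : ↥(Rset n K J) := ⟨Matrix.single p q 1, stdBasis_mem_lower hqp 1⟩ with ha
  have hz : Δ 0 = 0 := by
    have h := hadd 0 0
    rw [add_zero] at h
    exact (left_eq_add.mp h)
  have hab : a * b + b * a = 0 := by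
    apply Subtype.ext
    show (Matrix.single p q 1) * (Matrix.single i j x)
        + (Matrix.single i j x) * (Matrix.single p q 1) = 0
    rw [Matrix.single_mul_single_of_ne (h := hqi), Matrix.single_mul_single_of_ne (h := Ne.symm hpj)]
    · simp
  have h := hjord a b
  rw [hab, hz] at h
  have h2 := congrArg (fun M : ↥(Rset n K J) => (M : Matrix (Fin n) (Fin n) K) p q) h.symm
  push_cast at h2
  simp only [Matrix.add_apply, Matrix.zero_apply] at h2
  rw [Matrix.mul_single_apply_of_ne _ _ _ _ _ hqj,
      Matrix.single_mul_apply_of_ne _ _ _ _ _ hpi,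
      Matrix.single_mul_apply_same,
      Matrix.mul_single_apply_same] at h2
  simpa [add_comm] using h2

/-- vanishing of the diagonal coordinate maps `Δ^{i,j}_{k,k}` for indices
`k > s > m` all distinct from `i` and `j`. -/
theorem diagonal_coords_vanish (n : ℕ) (hn : 4 ≤ n) (K : Type) [Ring K]
    (htf : ∀ a : K, a + a = 0 → a = 0) (J : TwoSidedIdeal K)
    (Δ : ↥(Rset n K J) → ↥(Rset n K J))
    (hadd : ∀ a b : ↥(Rset n K J), Δ (a + b) = Δ a + Δ b)
    (hjord : ∀ a b : ↥(Rset n K J),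
      Δ (a * b + b * a) = Δ a * b + b * Δ a + a * Δ b + Δ b * a)
    (i j k s m : Fin n) (hms : m < s) (hsk : s < k)
    (hki : k ≠ i) (hkj : k ≠ j) (hsi : s ≠ i) (hsj : s ≠ j) (hmi : m ≠ i) (hmj : m ≠ j)
    (x : K) (hx : i ≤ j → x ∈ J) :
    (↑(Δ ⟨Matrix.single i j x, stdBasis_mem hx⟩) : Matrix (Fin n) (Fin n) K) k k = 0 ∧
    (↑(Δ ⟨Matrix.single i j x, stdBasis_mem hx⟩) : Matrix (Fin n) (Fin n) K) s s = 0 ∧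
    (↑(Δ ⟨Matrix.single i j x, stdBasis_mem hx⟩) : Matrix (Fin n) (Fin n) K) m m = 0 := by
  have e1 := key_diag Δ hadd hjord i j k s hsk hki hkj hsi hsj x hx
  have e2 := key_diag Δ hadd hjord i j k m (hms.trans hsk) hki hkj hmi hmj x hx
  have e3 := key_diag Δ hadd hjord i j s m hms hsi hsj hmi hmj x hx
  set D := (↑(Δ ⟨Matrix.single i j x, stdBasis_mem hx⟩) : Matrix (Fin n) (Fin n) K)
  have hsm : D s s = D m m := add_right_cancel (e1.trans e2.symm)
  rw [← hsm] at e3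
  have hs0 : D s s = 0 := htf _ e3
  have hm0 : D m m = 0 := hsm ▸ hs0
  have hk0 : D k k = 0 := by rw [hs0, zero_add] at e1; exact e1
  exact ⟨hk0, hs0, hm0⟩
end

section
/- Let Δ be a Jordan derivation of R = R_n(K,J) with n ≥ 4. Then for 1 < i < n−1 and x ∈ K, the matrix Δ(x e_{i+1,i}) has nonzero entries only in row i+1, column i, and position (n,1). -/
open Matrix

section Aux

variable {n : ℕ} {K : Type} [Ring K] {J : TwoSidedIdeal K}
variable {Δ : ↥(Rset n K J) → ↥(Rset n K J)}

lemma delta_zero (hadd : ∀ a b : ↥(Rset n K J), Δ (a + b) = Δ a + Δ b) : Δ 0 = 0 := by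
  have h := hadd 0 0
  rw [add_zero] at h
  exact add_eq_left.mp h.symm

lemma coeJord
    (hjord : ∀ a b : ↥(Rset n K J),
      Δ (a * b + b * a) = Δ a * b + b * Δ a + a * Δ b + Δ b * a)
    (u v : ↥(Rset n K J)) :
    ((Δ (u * v + v * u) : ↥(Rset n K J)) : Matrix (Fin n) (Fin n) K)
      = (Δ u : Matrix (Fin n) (Fin n) K) * (v : Matrix (Fin n) (Fin n) K)
        + (v : Matrix (Fin n) (Fin n) K) * (Δ u : Matrix (Fin n) (Fin n) K)
        + (u : Matrix (Fin n) (Fin n) K) * (Δ v : Matrix (Fin n) (Fin n) K)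
        + (Δ v : Matrix (Fin n) (Fin n) K) * (u : Matrix (Fin n) (Fin n) K) :=
  congrArg Subtype.val (hjord u v)

/-- Master identity: if `a = y e_{rr,cc}` and `b = k e_{p,q}` anticommute
(`cc ≠ p`, `q ≠ rr`), the Jordan identity evaluated entrywise. -/
lemma masterE (hadd : ∀ a b : ↥(Rset n K J), Δ (a + b) = Δ a + Δ b)
    (hjord : ∀ a b : ↥(Rset n K J),
      Δ (a * b + b * a) = Δ a * b + b * Δ a + a * Δ b + Δ b * a)
    {rr cc : Fin n} (hrc : cc < rr) (y : K)
    {p q : Fin n} (hqp : q < p) (k : K) (hcp : cc ≠ p) (hqr : q ≠ rr) (S T : Fin n) :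
    (0 : K)
      = ((Δ ⟨single rr cc y, stdBasis_mem_lower hrc y⟩ : Matrix (Fin n) (Fin n) K)
          * single p q k) S T
        + (single p q k
          * (Δ ⟨single rr cc y, stdBasis_mem_lower hrc y⟩ : Matrix (Fin n) (Fin n) K)) S T
        + (single rr cc y
          * (Δ ⟨single p q k, stdBasis_mem_lower hqp k⟩ : Matrix (Fin n) (Fin n) K)) S T
        + ((Δ ⟨single p q k, stdBasis_mem_lower hqp k⟩ : Matrix (Fin n) (Fin n) K)
          * single rr cc y) S T := by
  have hΔ0 := delta_zero hadd
  have hAB : single rr cc y * single p q k = 0 :=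
    single_mul_single_of_ne _ _ _ _ hcp k
  have hBA : single p q k * single rr cc y = 0 :=
    single_mul_single_of_ne _ _ _ _ hqr y
  have e : ((⟨single rr cc y, stdBasis_mem_lower hrc y⟩ : ↥(Rset n K J))
        * ⟨single p q k, stdBasis_mem_lower hqp k⟩
      + (⟨single p q k, stdBasis_mem_lower hqp k⟩ : ↥(Rset n K J))
        * ⟨single rr cc y, stdBasis_mem_lower hrc y⟩) = 0 := by
    apply Subtype.ext
    show single rr cc y * single p q k
        + single p q k * single rr cc y = 0
    rw [hAB, hBA, add_zero]
  have h := coeJord hjord ⟨single rr cc y, stdBasis_mem_lower hrc y⟩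
    ⟨single p q k, stdBasis_mem_lower hqp k⟩
  rw [e, hΔ0] at h
  have h' := congrFun (congrFun h S) T
  simp only [ZeroMemClass.coe_zero, Matrix.zero_apply, Matrix.add_apply] at h'
  exact h'

/-- `Δ(k e_{i,l})` entry `(j,l)`, via the factorization `e_{i,l} = (k e_{i,j}) ∘ e_{j,l}`. -/
lemma chainE1
    (hjord : ∀ a b : ↥(Rset n K J),
      Δ (a * b + b * a) = Δ a * b + b * Δ a + a * Δ b + Δ b * a)
    {i j l : Fin n} (hli : l < i) (hji : j < i) (hlj : l < j) (k : K) :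
    (Δ ⟨single i l k, stdBasis_mem_lower hli k⟩ : Matrix (Fin n) (Fin n) K) j l
      = (Δ ⟨single i j k, stdBasis_mem_lower hji k⟩ : Matrix (Fin n) (Fin n) K) j j
        + (Δ ⟨single i j k, stdBasis_mem_lower hji k⟩ : Matrix (Fin n) (Fin n) K) l l := by
  have e : ((⟨single i j k, stdBasis_mem_lower hji k⟩ : ↥(Rset n K J))
        * ⟨single j l 1, stdBasis_mem_lower hlj 1⟩
      + (⟨single j l 1, stdBasis_mem_lower hlj 1⟩ : ↥(Rset n K J))
        * ⟨single i j k, stdBasis_mem_lower hji k⟩)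
      = ⟨single i l k, stdBasis_mem_lower hli k⟩ := by
    apply Subtype.ext
    show single i j k * single j l 1
        + single j l 1 * single i j k = single i l k
    rw [single_mul_single_same, single_mul_single_of_ne _ _ _ _ (ne_of_lt hli) k,
      mul_one, add_zero]
  have h := coeJord hjord ⟨single i j k, stdBasis_mem_lower hji k⟩
    ⟨single j l 1, stdBasis_mem_lower hlj 1⟩
  rw [e] at h
  have h' := congrFun (congrFun h j) l
  simp only [Matrix.add_apply] at h'
  rw [mul_single_apply_same, single_mul_apply_same,
    single_mul_apply_of_ne _ _ _ _ _ (ne_of_lt hji),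
    mul_single_apply_of_ne _ _ _ _ _ (ne_of_lt hlj)] at h'
  simpa using h'

/-- `Δ(k e_{i,l})` entry `(i,j)`, via the factorization `e_{i,l} = e_{i,j} ∘ (k e_{j,l})`. -/
lemma chainE2
    (hjord : ∀ a b : ↥(Rset n K J),
      Δ (a * b + b * a) = Δ a * b + b * Δ a + a * Δ b + Δ b * a)
    {i j l : Fin n} (hli : l < i) (hji : j < i) (hlj : l < j) (k : K) :
    (Δ ⟨single i l k, stdBasis_mem_lower hli k⟩ : Matrix (Fin n) (Fin n) K) i j
      = (Δ ⟨single j l k, stdBasis_mem_lower hlj k⟩ : Matrix (Fin n) (Fin n) K) j j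
        + (Δ ⟨single j l k, stdBasis_mem_lower hlj k⟩ : Matrix (Fin n) (Fin n) K) i i := by
  have e : ((⟨single i j 1, stdBasis_mem_lower hji 1⟩ : ↥(Rset n K J))
        * ⟨single j l k, stdBasis_mem_lower hlj k⟩
      + (⟨single j l k, stdBasis_mem_lower hlj k⟩ : ↥(Rset n K J))
        * ⟨single i j 1, stdBasis_mem_lower hji 1⟩)
      = ⟨single i l k, stdBasis_mem_lower hli k⟩ := by
    apply Subtype.ext
    show single i j 1 * single j l k
        + single j l k * single i j 1 = single i l k
    rw [single_mul_single_same, single_mul_single_of_ne _ _ _ _ (ne_of_lt hli) 1,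
      one_mul, add_zero]
  have h := coeJord hjord ⟨single i j 1, stdBasis_mem_lower hji 1⟩
    ⟨single j l k, stdBasis_mem_lower hlj k⟩
  rw [e] at h
  have h' := congrFun (congrFun h i) j
  simp only [Matrix.add_apply] at h'
  rw [mul_single_apply_of_ne _ _ _ _ _ (ne_of_gt hlj),
    single_mul_apply_of_ne _ _ _ _ _ (ne_of_gt hji),
    single_mul_apply_same, mul_single_apply_same] at h'
  simpa using h'

variable (hadd : ∀ a b : ↥(Rset n K J), Δ (a + b) = Δ a + Δ b)
    (hjord : ∀ a b : ↥(Rset n K J),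
      Δ (a * b + b * a) = Δ a * b + b * Δ a + a * Δ b + Δ b * a)

section UseVars
variable {rr cc : Fin n} (hrc : cc < rr) (y : K)

include hadd hjord hrc

/-- Off-diagonal vanishing, via `b = e_{L,S}` at entry `(L,T)`. -/
lemma off1 {L S T : Fin n} (hSL : S < L) (hcL : cc ≠ L) (hSrr : S ≠ rr)
    (hTS : T ≠ S) (hLrr : L ≠ rr) (hTc : T ≠ cc) :
    (Δ ⟨single rr cc y, stdBasis_mem_lower hrc y⟩ : Matrix (Fin n) (Fin n) K) S T = 0 := by
  have H := masterE hadd hjord hrc y hSL 1 hcL hSrr L T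
  rw [mul_single_apply_of_ne _ _ _ _ _ hTS,
    single_mul_apply_same,
    single_mul_apply_of_ne _ _ _ _ _ hLrr,
    mul_single_apply_of_ne _ _ _ _ _ hTc] at H
  simpa using H.symm

/-- Off-diagonal vanishing, via `b = e_{T,Z}` at entry `(S,Z)`. -/
lemma off2 {Z S T : Fin n} (hZT : Z < T) (hcT : cc ≠ T) (hZrr : Z ≠ rr)
    (hST : S ≠ T) (hSrr : S ≠ rr) (hZc : Z ≠ cc) :
    (Δ ⟨single rr cc y, stdBasis_mem_lower hrc y⟩ : Matrix (Fin n) (Fin n) K) S T = 0 := by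
  have H := masterE hadd hjord hrc y hZT 1 hcT hZrr S Z
  rw [mul_single_apply_same,
    single_mul_apply_of_ne _ _ _ _ _ hST,
    single_mul_apply_of_ne _ _ _ _ _ hSrr,
    mul_single_apply_of_ne _ _ _ _ _ hZc] at H
  simpa using H.symm

/-- Diagonal pair relation with weight `k`: via `b = k e_{S,T}` at entry `(S,T)`. -/
lemma pairk {S T : Fin n} (hTS : T < S) (hcS : cc ≠ S) (hTrr : T ≠ rr)
    (hSrr : S ≠ rr) (hTc : T ≠ cc) (k : K) :
    (Δ ⟨single rr cc y, stdBasis_mem_lower hrc y⟩ : Matrix (Fin n) (Fin n) K) S S * k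
      + k * (Δ ⟨single rr cc y, stdBasis_mem_lower hrc y⟩ : Matrix (Fin n) (Fin n) K) T T
      = 0 := by
  have H := masterE hadd hjord hrc y hTS k hcS hTrr S T
  rw [mul_single_apply_same,
    single_mul_apply_same,
    single_mul_apply_of_ne _ _ _ _ _ hSrr,
    mul_single_apply_of_ne _ _ _ _ _ hTc] at H
  simpa using H.symm

/-- Relation `F2`: via `b = k e_{rr,l}` at entry `(rr,l)`, using `chainE1`. -/
lemma F2gen {l : Fin n} (hlc : l < cc) (hlrr : l < rr) (k : K) :
    (Δ ⟨single rr cc y, stdBasis_mem_lower hrc y⟩ : Matrix (Fin n) (Fin n) K) rr rr * k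
      + k * (Δ ⟨single rr cc y, stdBasis_mem_lower hrc y⟩ : Matrix (Fin n) (Fin n) K) l l
      + y * ((Δ ⟨single rr cc k, stdBasis_mem_lower hrc k⟩ : Matrix (Fin n) (Fin n) K) cc cc
        + (Δ ⟨single rr cc k, stdBasis_mem_lower hrc k⟩ : Matrix (Fin n) (Fin n) K) l l)
      = 0 := by
  have H := masterE hadd hjord hrc y hlrr k (ne_of_lt hrc) (ne_of_lt hlrr) rr l
  rw [mul_single_apply_same,
    single_mul_apply_same,
    single_mul_apply_same,
    mul_single_apply_of_ne _ _ _ _ _ (ne_of_lt hlc),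
    chainE1 hjord hlrr hrc hlc k] at H
  simpa using H.symm

/-- Relation `F3`: via `b = k e_{m,cc}` at entry `(m,cc)`, using `chainE2`. -/
lemma F3gen {m : Fin n} (hrm : rr < m) (hcm : cc < m) (k : K) :
    (Δ ⟨single rr cc y, stdBasis_mem_lower hrc y⟩ : Matrix (Fin n) (Fin n) K) m m * k
      + k * (Δ ⟨single rr cc y, stdBasis_mem_lower hrc y⟩ : Matrix (Fin n) (Fin n) K) cc cc
      + ((Δ ⟨single rr cc k, stdBasis_mem_lower hrc k⟩ : Matrix (Fin n) (Fin n) K) rr rr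
        + (Δ ⟨single rr cc k, stdBasis_mem_lower hrc k⟩ : Matrix (Fin n) (Fin n) K) m m) * y
      = 0 := by
  have H := masterE hadd hjord hrc y hcm k (ne_of_lt hcm) (ne_of_lt hrc) m cc
  rw [mul_single_apply_same,
    mul_single_apply_same,
    single_mul_apply_same,
    single_mul_apply_of_ne _ _ _ _ _ (ne_of_gt hrm),
    chainE2 hjord hcm hrm hrc k] at H
  simpa using H.symm

end UseVars

end Aux

/-- for `1 < i < n-1` (one-based), `Δ(x e_{i+1,i})` is supported on row
`i+1`, column `i` and position `(n,1)`.  Here `c` is the zero-based column index. -/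
theorem image_of_subdiagonal_unit (n : ℕ) (hn : 4 ≤ n) (K : Type) [Ring K]
    (htf : ∀ a : K, a + a = 0 → a = 0) (J : TwoSidedIdeal K)
    (Δ : ↥(Rset n K J) → ↥(Rset n K J))
    (hadd : ∀ a b : ↥(Rset n K J), Δ (a + b) = Δ a + Δ b)
    (hjord : ∀ a b : ↥(Rset n K J),
      Δ (a * b + b * a) = Δ a * b + b * Δ a + a * Δ b + Δ b * a)
    (c : Fin n) (hc1 : 1 ≤ (c : ℕ)) (hc2 : (c : ℕ) < n - 2) (x : K)
    (s t : Fin n) (hs : (s : ℕ) ≠ (c : ℕ) + 1) (ht : t ≠ c)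
    (hnot : ¬ ((s : ℕ) = n - 1 ∧ (t : ℕ) = 0)) :
    (↑(Δ ⟨Matrix.single ⟨(c : ℕ) + 1, by omega⟩ c x,
        stdBasis_mem_lower (by simp only [Fin.lt_def]; omega) x⟩) :
      Matrix (Fin n) (Fin n) K) s t = 0 := by
  have hcv := c.isLt
  have hsv := s.isLt
  have htv := t.isLt
  have fne : ∀ {a b : Fin n}, (a : ℕ) ≠ (b : ℕ) → a ≠ b :=
    fun h e => h (congrArg Fin.val e)
  have hcn : (c : ℕ) + 1 < n := by omega
  set rr : Fin n := ⟨(c : ℕ) + 1, hcn⟩ with hrr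
  have hrrv : (rr : ℕ) = (c : ℕ) + 1 := rfl
  have hltrc : c < rr := by rw [Fin.lt_def, hrrv]; omega
  show (Δ ⟨single rr c x, stdBasis_mem_lower hltrc x⟩ :
      Matrix (Fin n) (Fin n) K) s t = 0
  by_cases hst : s = t
  · -- diagonal case
    obtain rfl := hst
    have hsc : (s : ℕ) ≠ (c : ℕ) := fun h => ht (Fin.ext h)
    by_cases hn5 : 5 ≤ n
    · -- at least three indices outside {c, c+1}
      -- symmetric pair relation
      have pairSym : ∀ a b : Fin n, a ≠ b → (a : ℕ) ≠ (c : ℕ) → (a : ℕ) ≠ (c : ℕ) + 1 →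
          (b : ℕ) ≠ (c : ℕ) → (b : ℕ) ≠ (c : ℕ) + 1 →
          (Δ ⟨single rr c x, stdBasis_mem_lower hltrc x⟩ :
            Matrix (Fin n) (Fin n) K) a a
          + (Δ ⟨single rr c x, stdBasis_mem_lower hltrc x⟩ :
            Matrix (Fin n) (Fin n) K) b b = 0 := by
        intro a b hab ha1 ha2 hb1 hb2
        rcases hab.lt_or_gt with h | h
        · have := pairk hadd hjord hltrc x h (fne (by omega)) (fne (by omega))
            (fne (by omega)) (fne (by omega)) (1 : K)
          rw [mul_one, one_mul] at this
          rw [add_comm]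
          exact this
        · have := pairk hadd hjord hltrc x h (fne (by omega)) (fne (by omega))
            (fne (by omega)) (fne (by omega)) (1 : K)
          rw [mul_one, one_mul] at this
          exact this
      have solve : ∀ t1 t2 : Fin n, s ≠ t1 → s ≠ t2 → t1 ≠ t2 →
          (t1 : ℕ) ≠ (c : ℕ) → (t1 : ℕ) ≠ (c : ℕ) + 1 →
          (t2 : ℕ) ≠ (c : ℕ) → (t2 : ℕ) ≠ (c : ℕ) + 1 →
          (Δ ⟨single rr c x, stdBasis_mem_lower hltrc x⟩ :
            Matrix (Fin n) (Fin n) K) s s = 0 := by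
        intro t1 t2 h1 h2 h12 e1 e2 e3 e4
        have p1 := pairSym s t1 h1 hsc hs e1 e2
        have p2 := pairSym s t2 h2 hsc hs e3 e4
        have p3 := pairSym t1 t2 h12 e1 e2 e3 e4
        refine htf _ ?_
        have comb :
            (Δ ⟨single rr c x, stdBasis_mem_lower hltrc x⟩ :
              Matrix (Fin n) (Fin n) K) s s
            + (Δ ⟨single rr c x, stdBasis_mem_lower hltrc x⟩ :
              Matrix (Fin n) (Fin n) K) s s
            = ((Δ ⟨single rr c x, stdBasis_mem_lower hltrc x⟩ :
              Matrix (Fin n) (Fin n) K) s s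
              + (Δ ⟨single rr c x, stdBasis_mem_lower hltrc x⟩ :
              Matrix (Fin n) (Fin n) K) t1 t1)
            + ((Δ ⟨single rr c x, stdBasis_mem_lower hltrc x⟩ :
              Matrix (Fin n) (Fin n) K) s s
              + (Δ ⟨single rr c x, stdBasis_mem_lower hltrc x⟩ :
              Matrix (Fin n) (Fin n) K) t2 t2)
            - ((Δ ⟨single rr c x, stdBasis_mem_lower hltrc x⟩ :
              Matrix (Fin n) (Fin n) K) t1 t1
              + (Δ ⟨single rr c x, stdBasis_mem_lower hltrc x⟩ :
              Matrix (Fin n) (Fin n) K) t2 t2) := by abel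
        rw [comb, p1, p2, p3]
        simp
      -- build the pool {0, u, n-1}
      have h0n : (0 : ℕ) < n := by omega
      have hLn : n - 1 < n := by omega
      set Z : Fin n := ⟨0, h0n⟩ with hZ
      have hZv : (Z : ℕ) = 0 := rfl
      set L : Fin n := ⟨n - 1, hLn⟩ with hL
      have hLv : (L : ℕ) = n - 1 := rfl
      have hUn : (if (c : ℕ) = 1 then 3 else 1) < n := by split <;> omega
      set U : Fin n := ⟨if (c : ℕ) = 1 then 3 else 1, hUn⟩ with hU
      have hUv : (U : ℕ) = if (c : ℕ) = 1 then 3 else 1 := rfl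
      have hUcases : ((c : ℕ) = 1 ∧ (U : ℕ) = 3) ∨ ((c : ℕ) ≠ 1 ∧ (U : ℕ) = 1) := by
        by_cases h : (c : ℕ) = 1
        · left; exact ⟨h, by rw [hUv, if_pos h]⟩
        · right; exact ⟨h, by rw [hUv, if_neg h]⟩
      have hUc : (U : ℕ) ≠ (c : ℕ) := by rcases hUcases with ⟨h1, h2⟩ | ⟨h1, h2⟩ <;> omega
      have hUr : (U : ℕ) ≠ (c : ℕ) + 1 := by rcases hUcases with ⟨h1, h2⟩ | ⟨h1, h2⟩ <;> omega
      have hU0 : (U : ℕ) ≠ 0 := by rcases hUcases with ⟨h1, h2⟩ | ⟨h1, h2⟩ <;> omega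
      have hUL : (U : ℕ) ≠ n - 1 := by rcases hUcases with ⟨h1, h2⟩ | ⟨h1, h2⟩ <;> omega
      by_cases hs0 : (s : ℕ) = 0
      · exact solve U L (fne (by omega)) (fne (by omega)) (fne (by omega))
          hUc hUr (by omega) (by omega)
      · by_cases hsU : (s : ℕ) = (U : ℕ)
        · exact solve Z L (fne (by omega)) (fne (by omega)) (fne (by omega))
            (by omega) (by omega) (by omega) (by omega)
        · exact solve Z U (fne (by omega)) (fne (by omega)) (fne (by omega))
            (by omega) (by omega) hUc hUr
    · -- n = 4
      have hn4 : n = 4 := by omega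
      have hc1' : (c : ℕ) = 1 := by omega
      have h0n : (0 : ℕ) < n := by omega
      have h3n : (3 : ℕ) < n := by omega
      set f0 : Fin n := ⟨0, h0n⟩ with hf0
      have hf0v : (f0 : ℕ) = 0 := rfl
      set f3 : Fin n := ⟨3, h3n⟩ with hf3
      have hf3v : (f3 : ℕ) = 3 := rfl
      have hf0c : f0 < c := by rw [Fin.lt_def]; omega
      have hf0rr : f0 < rr := by rw [Fin.lt_def]; omega
      have hf0f3 : f0 < f3 := by rw [Fin.lt_def]; omega
      have hrrf3 : rr < f3 := by rw [Fin.lt_def]; omega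
      have hcf3 : c < f3 := by rw [Fin.lt_def]; omega
      -- F1: pairk with S = f3, T = f0
      have F1 : ∀ y k : K,
          (Δ ⟨single rr c y, stdBasis_mem_lower hltrc y⟩ :
            Matrix (Fin n) (Fin n) K) f3 f3 * k
          + k * (Δ ⟨single rr c y, stdBasis_mem_lower hltrc y⟩ :
            Matrix (Fin n) (Fin n) K) f0 f0 = 0 := fun y k =>
        pairk hadd hjord hltrc y hf0f3 (fne (by omega)) (fne (by omega))
          (fne (by omega)) (fne (by omega)) k
      have F2 : ∀ y k : K,
          (Δ ⟨single rr c y, stdBasis_mem_lower hltrc y⟩ :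
            Matrix (Fin n) (Fin n) K) rr rr * k
          + k * (Δ ⟨single rr c y, stdBasis_mem_lower hltrc y⟩ :
            Matrix (Fin n) (Fin n) K) f0 f0
          + y * ((Δ ⟨single rr c k, stdBasis_mem_lower hltrc k⟩ :
              Matrix (Fin n) (Fin n) K) c c
            + (Δ ⟨single rr c k, stdBasis_mem_lower hltrc k⟩ :
              Matrix (Fin n) (Fin n) K) f0 f0) = 0 := fun y k =>
        F2gen hadd hjord hltrc y hf0c hf0rr k
      have F3 : ∀ y k : K,
          (Δ ⟨single rr c y, stdBasis_mem_lower hltrc y⟩ :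
            Matrix (Fin n) (Fin n) K) f3 f3 * k
          + k * (Δ ⟨single rr c y, stdBasis_mem_lower hltrc y⟩ :
            Matrix (Fin n) (Fin n) K) c c
          + ((Δ ⟨single rr c k, stdBasis_mem_lower hltrc k⟩ :
              Matrix (Fin n) (Fin n) K) rr rr
            + (Δ ⟨single rr c k, stdBasis_mem_lower hltrc k⟩ :
              Matrix (Fin n) (Fin n) K) f3 f3) * y = 0 := fun y k =>
        F3gen hadd hjord hltrc y hrrf3 hcf3 k
      have key : ∀ y k : K,
          k * (Δ ⟨single rr c y, stdBasis_mem_lower hltrc y⟩ :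
            Matrix (Fin n) (Fin n) K) f0 f0
          + y * (Δ ⟨single rr c k, stdBasis_mem_lower hltrc k⟩ :
            Matrix (Fin n) (Fin n) K) f0 f0 = 0 := by
        intro y k
        refine htf _ ?_
        have e1 := F2 y k
        have e2 := F3 k y
        have e3 := F1 y k
        have e4 := F1 k y
        linear_combination (norm := noncomm_ring) e1 - e2 + e3 + e4
      have hP1 : (Δ ⟨single rr c (1 : K), stdBasis_mem_lower hltrc 1⟩ :
          Matrix (Fin n) (Fin n) K) f0 f0 = 0 := by
        refine htf _ ?_
        have h := key 1 1
        rwa [one_mul] at h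
      have hPx : (Δ ⟨single rr c x, stdBasis_mem_lower hltrc x⟩ :
          Matrix (Fin n) (Fin n) K) f0 f0 = 0 := by
        have h := key x 1
        rwa [one_mul, hP1, mul_zero, add_zero] at h
      have hQx : (Δ ⟨single rr c x, stdBasis_mem_lower hltrc x⟩ :
          Matrix (Fin n) (Fin n) K) f3 f3 = 0 := by
        have h := F1 x 1
        rwa [mul_one, hPx, mul_zero, add_zero] at h
      have : (s : ℕ) = 0 ∨ (s : ℕ) = 3 := by omega
      rcases this with h | h
      · have e : s = f0 := Fin.ext (by omega)
        rw [e]; exact hPx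
      · have e : s = f3 := Fin.ext (by omega)
        rw [e]; exact hQx
  · -- off-diagonal case
    by_cases hsl : (s : ℕ) = n - 1
    · -- use off2 with Z = 0
      have ht0 : (t : ℕ) ≠ 0 := fun h => hnot ⟨hsl, h⟩
      have h0n : (0 : ℕ) < n := by omega
      have hZv : ((⟨0, h0n⟩ : Fin n) : ℕ) = 0 := rfl
      have hZt : (⟨0, h0n⟩ : Fin n) < t := by rw [Fin.lt_def]; omega
      exact off2 hadd hjord hltrc x hZt (Ne.symm ht) (fne (by omega)) hst
        (fne (by omega)) (fne (by omega))
    · -- use off1 with L = n-1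
      have hLn : n - 1 < n := by omega
      have hLv : ((⟨n - 1, hLn⟩ : Fin n) : ℕ) = n - 1 := rfl
      have hsL : s < (⟨n - 1, hLn⟩ : Fin n) := by rw [Fin.lt_def]; omega
      exact off1 hadd hjord hltrc x hsL (fne (by omega)) (fne (by omega))
        (Ne.symm hst) (fne (by omega)) ht
end

section
/- Let α₁, α₂ : J → Ann_K J be additive maps with α₁(J²) = α₂(J²) = 0, α₁(xy) = α₁(y)x, and α₂(yx) = xα₂(y) for all x ∈ K, y ∈ J. Then the additive map on R_3(K,J) defined by y e_{1,3} ↦ α₁(y)e_{3,2} + α₂(y)e_{2,1}, y e_{1,2} ↦ α₂(y)e_{3,1}, y e_{2,3} ↦ α₁(y)e_{3,1}, and zero on all other elementary matrices, is a Jordan derivation of R_3(K,J). -/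
open Matrix

lemma add6 {K : Type} [Ring K] {J : TwoSidedIdeal K} (f : K → K)
    (hadd : ∀ y ∈ J, ∀ z ∈ J, f (y + z) = f y + f z)
    {t1 t2 t3 t4 t5 t6 : K} (m1 : t1 ∈ J) (m2 : t2 ∈ J) (m3 : t3 ∈ J)
    (m4 : t4 ∈ J) (m5 : t5 ∈ J) (m6 : t6 ∈ J) :
    f (t1 + t2 + t3 + (t4 + t5 + t6)) =
      f t1 + f t2 + f t3 + (f t4 + f t5 + f t6) := by
  rw [hadd _ (J.add_mem (J.add_mem m1 m2) m3) _ (J.add_mem (J.add_mem m4 m5) m6),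
      hadd _ (J.add_mem m1 m2) _ m3, hadd _ m1 _ m2,
      hadd _ (J.add_mem m4 m5) _ m6, hadd _ m4 _ m5]

set_option maxHeartbeats 1600000 in
/-- the construction (A2) gives a Jordan derivation of `R_3(K,J)`. -/
theorem A2_is_jordan_derivation (K : Type) [Ring K]
    (htf : ∀ a : K, a + a = 0 → a = 0) (J : TwoSidedIdeal K)
    (α₁ α₂ : K → K)
    (hadd₁ : ∀ y ∈ J, ∀ z ∈ J, α₁ (y + z) = α₁ y + α₁ z)
    (hadd₂ : ∀ y ∈ J, ∀ z ∈ J, α₂ (y + z) = α₂ y + α₂ z)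
    (hann₁ : ∀ y ∈ J, ∀ t ∈ J, α₁ y * t = 0 ∧ t * α₁ y = 0)
    (hann₂ : ∀ y ∈ J, ∀ t ∈ J, α₂ y * t = 0 ∧ t * α₂ y = 0)
    (hsq₁ : ∀ y ∈ J, ∀ z ∈ J, α₁ (y * z) = 0)
    (hsq₂ : ∀ y ∈ J, ∀ z ∈ J, α₂ (y * z) = 0)
    (h₁ : ∀ x : K, ∀ y ∈ J, α₁ (x * y) = α₁ y * x)
    (h₂ : ∀ x : K, ∀ y ∈ J, α₂ (y * x) = x * α₂ y) :
    ∃ Ω : ↥(Rset 3 K J) → ↥(Rset 3 K J),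
      (∀ M : ↥(Rset 3 K J),
        (↑(Ω M) : Matrix (Fin 3) (Fin 3) K) =
          Matrix.single (2 : Fin 3) (1 : Fin 3)
            (α₁ ((M : Matrix (Fin 3) (Fin 3) K) 0 2)) +
          Matrix.single (1 : Fin 3) (0 : Fin 3)
            (α₂ ((M : Matrix (Fin 3) (Fin 3) K) 0 2)) +
          Matrix.single (2 : Fin 3) (0 : Fin 3)
            (α₂ ((M : Matrix (Fin 3) (Fin 3) K) 0 1)) +
          Matrix.single (2 : Fin 3) (0 : Fin 3)
            (α₁ ((M : Matrix (Fin 3) (Fin 3) K) 1 2))) ∧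
      (∀ a b : ↥(Rset 3 K J), Ω (a + b) = Ω a + Ω b) ∧
      (∀ a b : ↥(Rset 3 K J),
        Ω (a * b + b * a) = Ω a * b + b * Ω a + a * Ω b + Ω b * a) := by
  refine ⟨fun M => ⟨Matrix.single (2 : Fin 3) (1 : Fin 3)
            (α₁ ((M : Matrix (Fin 3) (Fin 3) K) 0 2)) +
          Matrix.single (1 : Fin 3) (0 : Fin 3)
            (α₂ ((M : Matrix (Fin 3) (Fin 3) K) 0 2)) +
          Matrix.single (2 : Fin 3) (0 : Fin 3)
            (α₂ ((M : Matrix (Fin 3) (Fin 3) K) 0 1)) +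
          Matrix.single (2 : Fin 3) (0 : Fin 3)
            (α₁ ((M : Matrix (Fin 3) (Fin 3) K) 1 2)), by
        refine add_mem (add_mem (add_mem ?_ ?_) ?_) ?_ <;>
          exact stdBasis_mem (fun h => absurd h (by decide))⟩,
      fun M => rfl, ?_, ?_⟩
  · -- additivity
    intro a b
    apply Subtype.ext
    have hA : ∀ i j : Fin 3, i ≤ j → (a : Matrix (Fin 3) (Fin 3) K) i j ∈ J := a.2
    have hB : ∀ i j : Fin 3, i ≤ j → (b : Matrix (Fin 3) (Fin 3) K) i j ∈ J := b.2
    show _ = _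
    simp only [NonUnitalSubring.val_add, Matrix.add_apply,
      hadd₁ _ (hA 0 2 (by decide)) _ (hB 0 2 (by decide)),
      hadd₂ _ (hA 0 2 (by decide)) _ (hB 0 2 (by decide)),
      hadd₂ _ (hA 0 1 (by decide)) _ (hB 0 1 (by decide)),
      hadd₁ _ (hA 1 2 (by decide)) _ (hB 1 2 (by decide)),
      Matrix.single_add]
    abel
  · -- Jordan derivation property
    intro a b
    apply Subtype.ext
    set A := (a : Matrix (Fin 3) (Fin 3) K) with hAdef
    set B := (b : Matrix (Fin 3) (Fin 3) K) with hBdef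
    have hA : ∀ i j : Fin 3, i ≤ j → A i j ∈ J := a.2
    have hB : ∀ i j : Fin 3, i ≤ j → B i j ∈ J := b.2
    have hA00 := hA 0 0 (by decide); have hA01 := hA 0 1 (by decide)
    have hA02 := hA 0 2 (by decide); have hA11 := hA 1 1 (by decide)
    have hA12 := hA 1 2 (by decide); have hA22 := hA 2 2 (by decide)
    have hB00 := hB 0 0 (by decide); have hB01 := hB 0 1 (by decide)
    have hB02 := hB 0 2 (by decide); have hB11 := hB 1 1 (by decide)
    have hB12 := hB 1 2 (by decide); have hB22 := hB 2 2 (by decide)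
    have f02₁ : α₁ (A 0 0 * B 0 2 + A 0 1 * B 1 2 + A 0 2 * B 2 2 +
        (B 0 0 * A 0 2 + B 0 1 * A 1 2 + B 0 2 * A 2 2)) = 0 := by
      rw [add6 α₁ hadd₁ (J.mul_mem_right _ _ hA00) (J.mul_mem_right _ _ hA01)
        (J.mul_mem_right _ _ hA02) (J.mul_mem_right _ _ hB00)
        (J.mul_mem_right _ _ hB01) (J.mul_mem_right _ _ hB02),
        hsq₁ _ hA00 _ hB02, hsq₁ _ hA01 _ hB12, hsq₁ _ hA02 _ hB22,
        hsq₁ _ hB00 _ hA02, hsq₁ _ hB01 _ hA12, hsq₁ _ hB02 _ hA22]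
      simp
    have f02₂ : α₂ (A 0 0 * B 0 2 + A 0 1 * B 1 2 + A 0 2 * B 2 2 +
        (B 0 0 * A 0 2 + B 0 1 * A 1 2 + B 0 2 * A 2 2)) = 0 := by
      rw [add6 α₂ hadd₂ (J.mul_mem_right _ _ hA00) (J.mul_mem_right _ _ hA01)
        (J.mul_mem_right _ _ hA02) (J.mul_mem_right _ _ hB00)
        (J.mul_mem_right _ _ hB01) (J.mul_mem_right _ _ hB02),
        hsq₂ _ hA00 _ hB02, hsq₂ _ hA01 _ hB12, hsq₂ _ hA02 _ hB22,
        hsq₂ _ hB00 _ hA02, hsq₂ _ hB01 _ hA12, hsq₂ _ hB02 _ hA22]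
      simp
    have f01 : α₂ (A 0 0 * B 0 1 + A 0 1 * B 1 1 + A 0 2 * B 2 1 +
        (B 0 0 * A 0 1 + B 0 1 * A 1 1 + B 0 2 * A 2 1)) =
        B 2 1 * α₂ (A 0 2) + A 2 1 * α₂ (B 0 2) := by
      rw [add6 α₂ hadd₂ (J.mul_mem_right _ _ hA00) (J.mul_mem_right _ _ hA01)
        (J.mul_mem_right _ _ hA02) (J.mul_mem_right _ _ hB00)
        (J.mul_mem_right _ _ hB01) (J.mul_mem_right _ _ hB02),
        hsq₂ _ hA00 _ hB01, hsq₂ _ hA01 _ hB11,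
        hsq₂ _ hB00 _ hA01, hsq₂ _ hB01 _ hA11,
        h₂ (B 2 1) _ hA02, h₂ (A 2 1) _ hB02]
      abel
    have f12 : α₁ (A 1 0 * B 0 2 + A 1 1 * B 1 2 + A 1 2 * B 2 2 +
        (B 1 0 * A 0 2 + B 1 1 * A 1 2 + B 1 2 * A 2 2)) =
        α₁ (B 0 2) * A 1 0 + α₁ (A 0 2) * B 1 0 := by
      rw [add6 α₁ hadd₁ (J.mul_mem_left _ _ hB02) (J.mul_mem_right _ _ hA11)
        (J.mul_mem_right _ _ hA12) (J.mul_mem_left _ _ hA02)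
        (J.mul_mem_right _ _ hB11) (J.mul_mem_right _ _ hB12),
        hsq₁ _ hA11 _ hB12, hsq₁ _ hA12 _ hB22,
        hsq₁ _ hB11 _ hA12, hsq₁ _ hB12 _ hA22,
        h₁ (A 1 0) _ hB02, h₁ (B 1 0) _ hA02]
      abel
    have z1A := hann₁ _ hA02
    have z2A := hann₂ _ hA02
    have z3A := hann₂ _ hA01
    have z4A := hann₁ _ hA12
    have z1B := hann₁ _ hB02
    have z2B := hann₂ _ hB02
    have z3B := hann₂ _ hB01
    have z4B := hann₁ _ hB12
    show _ = _
    ext i j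
    simp only [NonUnitalSubring.val_add, NonUnitalSubring.val_mul, ← hAdef, ← hBdef]
    fin_cases i <;> fin_cases j <;>
      simp [Matrix.mul_apply, Matrix.add_apply, Fin.sum_univ_three,
        Matrix.single, mul_add, add_mul, f02₁, f02₂, f01, f12,
        z1A, z2A, z3A, z4A, z1B, z2B, z3B, z4B,
        hA00, hA01, hA02, hA11, hA12, hA22,
        hB00, hB01, hB02, hB11, hB12, hB22] <;>
      first
        | rfl
        | rw [f02₁]
        | rw [f02₂]
        | abel
end
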